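/- Hardy's inequality (supercritical case): Let p > 1 and k be real numbers with k + 1/p > 1. Then there exists a constant C = C(k,p) such that for every function g : (0,1) → ℝ that is absolutely continuous on (0,1) with the right-hand side finite, ∫₀¹ (s^{k-1} |g(s)|)^p ds ≤ C ∫₀¹ ( (s^k |g'(s)|)^p + (s^k |g(s)|)^p ) ds. -/

import Mathlib

open MeasureTheory Set
open scoped ENNReal NNReal

-- t^k ≥ min(a^k, b^k) on [a,b] ⊆ (0,∞)
lemma aux_rpow_min {a b t K : ℝ} (ha : 0 < a) (hat : a ≤ t) (htb : t ≤ b) :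
    min (a ^ K) (b ^ K) ≤ t ^ K := by
  rcases le_or_gt 0 K with hK | hK
  · exact le_trans (min_le_left _ _) (Real.rpow_le_rpow ha.le hat hK)
  · exact le_trans (min_le_right _ _) (Real.rpow_le_rpow_of_nonpos (ha.trans_le hat) htb hK.le)

-- (x+y)^p ≤ 2^p (x^p + y^p) in ℝ≥0∞
lemma aux_two {x y : ℝ≥0∞} {p : ℝ} (hp : 0 ≤ p) :
    (x + y) ^ p ≤ 2 ^ p * (x ^ p + y ^ p) := by
  have h1 : x + y ≤ 2 * max x y := by
    rcases le_total x y with h | h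
    · simpa [max_eq_right h, two_mul] using add_le_add h le_rfl
    · simpa [max_eq_left h, two_mul] using add_le_add le_rfl h
  calc (x + y) ^ p ≤ (2 * max x y) ^ p := ENNReal.rpow_le_rpow h1 hp
    _ = 2 ^ p * (max x y) ^ p := ENNReal.mul_rpow_of_nonneg _ _ hp
    _ ≤ 2 ^ p * (x ^ p + y ^ p) := by
        gcongr
        rcases le_total x y with h | h
        · rw [max_eq_right h]; exact le_add_self
        · rw [max_eq_left h]; exact le_self_add

-- ∫⁻ s in Ioo 0 t, s^r = t^(r+1)/(r+1)  for r > -1, 0 < t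
lemma aux_lint_rpow_zero {r t : ℝ} (hr : -1 < r) (ht : 0 < t) :
    ∫⁻ s in Ioo (0:ℝ) t, ENNReal.ofReal (s ^ r) = ENNReal.ofReal (t ^ (r+1) / (r+1)) := by
  have hint : IntegrableOn (fun s => s ^ r) (Ioo (0:ℝ) t) := by
    have h := intervalIntegral.intervalIntegrable_rpow' (a := 0) (b := t) hr
    rw [intervalIntegrable_iff, uIoc_of_le ht.le] at h
    exact h.mono_set Ioo_subset_Ioc_self
  rw [← ofReal_integral_eq_lintegral_ofReal hint]
  · congr 1
    rw [← integral_Ioc_eq_integral_Ioo, ← intervalIntegral.integral_of_le ht.le,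
      integral_rpow (Or.inl hr), Real.zero_rpow (by linarith), sub_zero]
  · filter_upwards [ae_restrict_mem measurableSet_Ioo] with s hs
    exact Real.rpow_nonneg hs.1.le r

-- ∫⁻ t in Ioo s 1, t^r ≤ s^(r+1)/(-(r+1))  for r < -1, 0 < s ≤ 1
lemma aux_lint_rpow_one {r s : ℝ} (hr : r < -1) (hs : 0 < s) (hs1 : s ≤ 1) :
    ∫⁻ t in Ioo s 1, ENNReal.ofReal (t ^ r) ≤ ENNReal.ofReal (s ^ (r+1) / (-(r+1))) := by
  have hint : IntegrableOn (fun t => t ^ r) (Ioo s 1) := by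
    have h := intervalIntegral.intervalIntegrable_rpow (μ := volume) (a := s) (b := 1) (r := r)
      (Or.inr (by rw [Set.uIcc_of_le hs1]; intro h0; exact absurd h0.1 (by linarith)))
    rw [intervalIntegrable_iff, uIoc_of_le hs1] at h
    exact h.mono_set Ioo_subset_Ioc_self
  rw [← ofReal_integral_eq_lintegral_ofReal hint]
  · apply ENNReal.ofReal_le_ofReal
    rw [← integral_Ioc_eq_integral_Ioo, ← intervalIntegral.integral_of_le hs1,
      integral_rpow (Or.inr ⟨by linarith, by rw [Set.uIcc_of_le hs1]; intro h0; exact absurd h0.1 (by linarith)⟩)]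
    rw [Real.one_rpow]
    have h2 : (1 - s ^ (r+1)) / (r+1) = (s ^ (r+1) - 1) / (-(r+1)) := by
      rw [show s ^ (r+1) - 1 = -(1 - s ^ (r+1)) by ring, neg_div_neg_eq]
    rw [h2]
    gcongr
    · linarith
    · linarith
  · filter_upwards [ae_restrict_mem measurableSet_Ioo] with t htm
    exact Real.rpow_nonneg (by linarith [htm.1]) r

lemma aux_swap {c F : ℝ → ℝ≥0∞} (hc : Measurable c) (hF : Measurable F) :
    ∫⁻ s in Ioo (0:ℝ) 1, c s * ∫⁻ t in Ioo s 1, F t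
      = ∫⁻ t in Ioo (0:ℝ) 1, (∫⁻ s in Ioo (0:ℝ) t, c s) * F t := by
  set μ := volume.restrict (Ioo (0:ℝ) 1) with hμ
  set Φ : ℝ × ℝ → ℝ≥0∞ := fun z => c z.1 * {q : ℝ × ℝ | q.1 < q.2}.indicator (fun q => F q.2) z
    with hΦdef
  have hΦ : Measurable Φ :=
    (hc.comp measurable_fst).mul
      ((hF.comp measurable_snd).indicator (measurableSet_lt measurable_fst measurable_snd))
  have key : ∀ s t : ℝ, Φ (s, t) = c s * (Ioi s).indicator F t := by
    intro s t
    simp only [hΦdef, Set.indicator_apply, mem_setOf_eq, mem_Ioi]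
  have step1 : ∫⁻ s in Ioo (0:ℝ) 1, c s * ∫⁻ t in Ioo s 1, F t
      = ∫⁻ s, ∫⁻ t, Φ (s, t) ∂μ ∂μ := by
    apply setLIntegral_congr_fun measurableSet_Ioo
    intro s hs
    have hset : Ioi s ∩ Ioo (0:ℝ) 1 = Ioo s 1 := by
      ext t
      simp only [mem_inter_iff, mem_Ioi, mem_Ioo]
      exact ⟨fun ⟨h1, _, h3⟩ => ⟨h1, h3⟩, fun ⟨h1, h2⟩ => ⟨h1, hs.1.trans h1, h2⟩⟩
    simp only [key]
    rw [lintegral_const_mul _ (hF.indicator measurableSet_Ioi),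
      lintegral_indicator measurableSet_Ioi, hμ, Measure.restrict_restrict measurableSet_Ioi,
      hset]
  have step3 : ∫⁻ t, ∫⁻ s, Φ (s, t) ∂μ ∂μ
      = ∫⁻ t in Ioo (0:ℝ) 1, (∫⁻ s in Ioo (0:ℝ) t, c s) * F t := by
    apply setLIntegral_congr_fun measurableSet_Ioo
    intro t ht
    have key2 : ∀ s : ℝ, Φ (s, t) = (Iio t).indicator c s * F t := by
      intro s
      simp only [hΦdef, Set.indicator_apply, mem_setOf_eq, mem_Iio]
      by_cases h : s < t <;> simp [h]
    have hset : Iio t ∩ Ioo (0:ℝ) 1 = Ioo (0:ℝ) t := by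
      ext s
      simp only [mem_inter_iff, mem_Iio, mem_Ioo]
      exact ⟨fun ⟨h1, h2, _⟩ => ⟨h2, h1⟩, fun ⟨h1, h2⟩ => ⟨h2, h1, h2.trans ht.2⟩⟩
    simp only [key2]
    rw [lintegral_mul_const _ (hc.indicator measurableSet_Iio),
      lintegral_indicator measurableSet_Iio, hμ, Measure.restrict_restrict measurableSet_Iio,
      hset]
  rw [step1, lintegral_lintegral_swap hΦ.aemeasurable, step3]

lemma aux_meas (c : ℝ) : Measurable fun t : ℝ => ENNReal.ofReal (t ^ c) := by fun_prop

lemma aux_hardy_core {p k : ℝ} (hp : 1 < p) (hα : 0 < (k - 1) * p + 1) :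
    ∃ C : ℝ, 0 < C ∧ ∀ H : ℝ → ℝ≥0∞, Measurable H →
      ∫⁻ s in Ioo (0:ℝ) 1,
          (ENNReal.ofReal (s ^ (k - 1)) * ∫⁻ t in Ioo s 1, ENNReal.ofReal (t ^ (-k)) * H t) ^ p
        ≤ ENNReal.ofReal C * ∫⁻ t in Ioo (0:ℝ) 1, H t ^ p := by
  have hp0 : (0:ℝ) < p := by linarith
  have hpne : p ≠ 0 := ne_of_gt hp0
  have hpm1 : (0:ℝ) < p - 1 := by linarith
  have hpm1' : p - 1 ≠ 0 := ne_of_gt hpm1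
  set α : ℝ := (k - 1) * p + 1 with hαdef
  set q : ℝ := p / (p - 1) with hqdef
  have hpq : p.HolderConjugate q := Real.HolderConjugate.conjExponent hp
  set β : ℝ := -α / (2 * (p - 1)) with hβdef
  have hβ : β < 0 := div_neg_of_neg_of_pos (by linarith) (by linarith)
  set a : ℝ := (β - 1) * (p - 1) / p with hadef
  have haq : a * q = β - 1 := by rw [hadef, hqdef]; first | (field_simp; ring) | field_simp
  set γ : ℝ := (k - 1) * p + β * (p - 1) with hγdef
  have hmβ : 0 < -β := by linarith
  have hγ1 : γ + 1 = α / 2 := by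
    rw [hγdef, hβdef]; first | (field_simp; ring) | field_simp
  have hγpos : 0 < γ + 1 := by rw [hγ1]; linarith
  have hγ : -1 < γ := by linarith
  have he : (-k - a) * p + (γ + 1) = 0 := by
    rw [hadef, hγdef]; first | (field_simp; ring) | field_simp
  set Cin : ℝ := (1 / (-β)) ^ (p - 1) with hCindef
  have hCin : 0 < Cin := Real.rpow_pos_of_pos (by rw [one_div]; exact inv_pos.2 hmβ) _
  refine ⟨Cin * (1 / (γ + 1)), by positivity, fun H hH => ?_⟩
  set Z : ℝ → ℝ≥0∞ := fun t => ENNReal.ofReal (t ^ ((-k - a) * p)) * H t ^ p with hZdef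
  have hZ : Measurable Z := (aux_meas _).mul (hH.pow_const p)
  set ZI : ℝ → ℝ≥0∞ := fun s => ∫⁻ t in Ioo s 1, Z t with hZIdef
  have hZI : Measurable ZI := by
    apply Antitone.measurable
    intro s s' hss'
    exact lintegral_mono' (Measure.restrict_mono (Ioo_subset_Ioo_left hss') le_rfl) le_rfl
  -- Step A : pointwise bound
  have stepA : ∀ s ∈ Ioo (0:ℝ) 1,
      (ENNReal.ofReal (s ^ (k - 1)) * ∫⁻ t in Ioo s 1, ENNReal.ofReal (t ^ (-k)) * H t) ^ p
        ≤ ENNReal.ofReal Cin * (ENNReal.ofReal (s ^ γ) * ZI s) := by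
    intro s hs
    have hs0 : (0:ℝ) < s := hs.1
    have hs1 : s < 1 := hs.2
    have hcongr : ∫⁻ t in Ioo s 1, ENNReal.ofReal (t ^ (-k)) * H t
        = ∫⁻ t in Ioo s 1, ENNReal.ofReal (t ^ a) * (ENNReal.ofReal (t ^ (-k - a)) * H t) := by
      apply setLIntegral_congr_fun measurableSet_Ioo
      intro t ht; beta_reduce
      rw [← mul_assoc, ← ENNReal.ofReal_mul (Real.rpow_nonneg (hs0.trans ht.1).le _),
        ← Real.rpow_add (hs0.trans ht.1)]
      norm_num
    have hHolder := ENNReal.lintegral_mul_le_Lp_mul_Lq (volume.restrict (Ioo s 1)) hpq.symm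
      (f := fun t => ENNReal.ofReal (t ^ a))
      (g := fun t => ENNReal.ofReal (t ^ (-k - a)) * H t)
      (aux_meas a).aemeasurable (((aux_meas (-k - a)).mul hH).aemeasurable)
    have hY : ∫⁻ t in Ioo s 1, ENNReal.ofReal (t ^ a) ^ q ≤ ENNReal.ofReal (s ^ β / (-β)) := by
      have h1 : ∫⁻ t in Ioo s 1, ENNReal.ofReal (t ^ a) ^ q
          = ∫⁻ t in Ioo s 1, ENNReal.ofReal (t ^ (a * q)) := by
        apply setLIntegral_congr_fun measurableSet_Ioo
        intro t ht; beta_reduce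
        rw [ENNReal.ofReal_rpow_of_pos (Real.rpow_pos_of_pos (hs0.trans ht.1) a),
          ← Real.rpow_mul (hs0.trans ht.1).le]
      have haq1 : a * q < -1 := by rw [haq]; linarith
      have h2 := aux_lint_rpow_one haq1 hs0 hs1.le
      have h3 : a * q + 1 = β := by rw [haq]; ring
      rw [h3] at h2
      rw [h1]; exact h2
    have hZgoal : ∫⁻ t in Ioo s 1, (ENNReal.ofReal (t ^ (-k - a)) * H t) ^ p = ZI s := by
      apply setLIntegral_congr_fun measurableSet_Ioo
      intro t ht; beta_reduce
      rw [ENNReal.mul_rpow_of_nonneg _ _ hp0.le,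
        ENNReal.ofReal_rpow_of_pos (Real.rpow_pos_of_pos (hs0.trans ht.1) _),
        ← Real.rpow_mul (hs0.trans ht.1).le]
    rw [hcongr] at *
    have hIp : (∫⁻ t in Ioo s 1, ENNReal.ofReal (t ^ a) * (ENNReal.ofReal (t ^ (-k - a)) * H t)) ^ p
        ≤ ENNReal.ofReal (s ^ β / (-β)) ^ (p - 1) * ZI s := by
      calc (∫⁻ t in Ioo s 1, ENNReal.ofReal (t ^ a) * (ENNReal.ofReal (t ^ (-k - a)) * H t)) ^ p
          ≤ ((∫⁻ t in Ioo s 1, ENNReal.ofReal (t ^ a) ^ q) ^ (1/q)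
            * (∫⁻ t in Ioo s 1, (ENNReal.ofReal (t ^ (-k - a)) * H t) ^ p) ^ (1/p)) ^ p :=
            ENNReal.rpow_le_rpow hHolder hp0.le
        _ = ((∫⁻ t in Ioo s 1, ENNReal.ofReal (t ^ a) ^ q) ^ ((1/q) * p))
            * ((∫⁻ t in Ioo s 1, (ENNReal.ofReal (t ^ (-k - a)) * H t) ^ p) ^ ((1/p) * p)) := by
            rw [ENNReal.mul_rpow_of_nonneg _ _ hp0.le, ENNReal.rpow_mul, ENNReal.rpow_mul]
        _ = ((∫⁻ t in Ioo s 1, ENNReal.ofReal (t ^ a) ^ q) ^ (p - 1)) * ZI s := by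
            rw [hZgoal, show (1/q) * p = p - 1 by rw [hqdef]; field_simp,
              show (1/p) * p = 1 by field_simp, ENNReal.rpow_one]
        _ ≤ ENNReal.ofReal (s ^ β / (-β)) ^ (p - 1) * ZI s :=
            mul_le_mul_left (ENNReal.rpow_le_rpow hY (by linarith)) _
    calc (ENNReal.ofReal (s ^ (k - 1))
          * ∫⁻ t in Ioo s 1, ENNReal.ofReal (t ^ a) * (ENNReal.ofReal (t ^ (-k - a)) * H t)) ^ p
        = ENNReal.ofReal (s ^ (k - 1)) ^ p
          * (∫⁻ t in Ioo s 1, ENNReal.ofReal (t ^ a) * (ENNReal.ofReal (t ^ (-k - a)) * H t)) ^ p := by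
          rw [ENNReal.mul_rpow_of_nonneg _ _ hp0.le]
      _ ≤ ENNReal.ofReal (s ^ (k - 1)) ^ p * (ENNReal.ofReal (s ^ β / (-β)) ^ (p - 1) * ZI s) := by
          gcongr
      _ = ENNReal.ofReal Cin * (ENNReal.ofReal (s ^ γ) * ZI s) := by
          have e1 : ENNReal.ofReal (s ^ (k - 1)) ^ p = ENNReal.ofReal (s ^ ((k - 1) * p)) := by
            rw [ENNReal.ofReal_rpow_of_pos (Real.rpow_pos_of_pos hs0 _),
              ← Real.rpow_mul hs0.le]
          have e2 : ENNReal.ofReal (s ^ β / -β) ^ (p - 1)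
              = ENNReal.ofReal (s ^ (β * (p - 1)) * Cin) := by
            rw [ENNReal.ofReal_rpow_of_pos (div_pos (Real.rpow_pos_of_pos hs0 _) hmβ)]
            congr 1
            rw [div_eq_mul_one_div,
              Real.mul_rpow (Real.rpow_nonneg hs0.le _)
                (le_of_lt (by rw [one_div]; exact inv_pos.2 hmβ)),
              ← Real.rpow_mul hs0.le, hCindef]
          rw [e1, e2, ← mul_assoc, ← mul_assoc]
          congr 1
          rw [← ENNReal.ofReal_mul (Real.rpow_nonneg hs0.le _),
            ← ENNReal.ofReal_mul hCin.le]
          congr 1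
          have : s ^ γ = s ^ ((k - 1) * p) * s ^ (β * (p - 1)) := by
            rw [hγdef, Real.rpow_add hs0]
          rw [this]
          ring
  -- Step B : integrate and swap
  calc ∫⁻ s in Ioo (0:ℝ) 1,
        (ENNReal.ofReal (s ^ (k - 1)) * ∫⁻ t in Ioo s 1, ENNReal.ofReal (t ^ (-k)) * H t) ^ p
      ≤ ∫⁻ s in Ioo (0:ℝ) 1, ENNReal.ofReal Cin * (ENNReal.ofReal (s ^ γ) * ZI s) :=
        setLIntegral_mono' measurableSet_Ioo stepA
    _ = ENNReal.ofReal Cin * ∫⁻ s in Ioo (0:ℝ) 1, ENNReal.ofReal (s ^ γ) * ZI s :=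
        lintegral_const_mul _ ((aux_meas γ).mul hZI)
    _ = ENNReal.ofReal Cin * ∫⁻ t in Ioo (0:ℝ) 1, (∫⁻ s in Ioo (0:ℝ) t, ENNReal.ofReal (s ^ γ)) * Z t := by
        rw [aux_swap (aux_meas γ) hZ]
    _ = ENNReal.ofReal Cin * ∫⁻ t in Ioo (0:ℝ) 1, ENNReal.ofReal (1 / (γ + 1)) * H t ^ p := by
        congr 1
        apply setLIntegral_congr_fun measurableSet_Ioo
        intro t ht; beta_reduce
        rw [aux_lint_rpow_zero hγ ht.1, hZdef]
        rw [← mul_assoc, ← ENNReal.ofReal_mul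
          (div_nonneg (Real.rpow_nonneg ht.1.le _) hγpos.le)]
        congr 2
        rw [div_mul_eq_mul_div, ← Real.rpow_add ht.1,
          show γ + 1 + (-k - a) * p = 0 by linarith, Real.rpow_zero]
    _ = ENNReal.ofReal (Cin * (1 / (γ + 1))) * ∫⁻ t in Ioo (0:ℝ) 1, H t ^ p := by
        rw [lintegral_const_mul _ (hH.pow_const p), ENNReal.ofReal_mul hCin.le, mul_assoc]

theorem stmt_5 (p k : ℝ) (hp : 1 < p) (hk : k + 1 / p > 1) :
    ∃ C > (0 : ℝ), ∀ g g' : ℝ → ℝ,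
      (∀ s ∈ Ioo (0 : ℝ) 1, HasDerivAt g (g' s) s) →
      IntegrableOn (fun s => (s ^ k * |g' s|) ^ p + (s ^ k * |g s|) ^ p)
        (Ioo (0 : ℝ) 1) →
      ∫ s in Ioo (0 : ℝ) 1, (s ^ (k - 1) * |g s|) ^ p ≤
        C * ∫ s in Ioo (0 : ℝ) 1,
          ((s ^ k * |g' s|) ^ p + (s ^ k * |g s|) ^ p) := by
  have hp0 : (0:ℝ) < p := by linarith
  have hα : 0 < (k - 1) * p + 1 := by
    have h1 : -(1/p) < k - 1 := by linarith
    have h2 := mul_lt_mul_of_pos_right h1 hp0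
    have h3 : (-(1/p)) * p = -1 := by field_simp
    linarith [h2, h3.symm ▸ h2]
  obtain ⟨C₂, hC₂pos, hC₂⟩ := aux_hardy_core hp hα
  have hpne : p ≠ 0 := ne_of_gt hp0
  set q : ℝ := p / (p - 1) with hqdef
  have hpm1 : (0:ℝ) < p - 1 := by linarith
  have hpq : p.HolderConjugate q := Real.HolderConjugate.conjExponent hp
  set m₀ : ℝ := min ((2⁻¹:ℝ) ^ k) ((3/4:ℝ) ^ k) with hm₀def
  have hm₀ : 0 < m₀ := lt_min (Real.rpow_pos_of_pos (by norm_num) _)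
    (Real.rpow_pos_of_pos (by norm_num) _)
  set m₁ : ℝ := min ((2⁻¹:ℝ) ^ k) ((1:ℝ) ^ k) with hm₁def
  have hm₁ : 0 < m₁ := lt_min (Real.rpow_pos_of_pos (by norm_num) _)
    (Real.rpow_pos_of_pos (by norm_num) _)
  set K : ℝ≥0∞ := 2 ^ p * (ENNReal.ofReal (1 / ((k - 1) * p + 1)) * 2 ^ p *
      (ENNReal.ofReal 4 ^ p * ENNReal.ofReal m₀⁻¹ ^ p + ENNReal.ofReal m₁⁻¹ ^ p)
      + ENNReal.ofReal C₂) with hKdef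
  have h2top : (2:ℝ≥0∞) ^ p ≠ ⊤ := ENNReal.rpow_ne_top_of_nonneg hp0.le ENNReal.ofNat_ne_top
  have hKtop : K ≠ ⊤ := by
    rw [hKdef]
    apply ENNReal.mul_ne_top h2top
    apply ENNReal.add_ne_top.2
    constructor
    · apply ENNReal.mul_ne_top (ENNReal.mul_ne_top ENNReal.ofReal_ne_top h2top)
      exact ENNReal.add_ne_top.2
        ⟨ENNReal.mul_ne_top (ENNReal.rpow_ne_top_of_nonneg hp0.le ENNReal.ofReal_ne_top)
          (ENNReal.rpow_ne_top_of_nonneg hp0.le ENNReal.ofReal_ne_top),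
         ENNReal.rpow_ne_top_of_nonneg hp0.le ENNReal.ofReal_ne_top⟩
    · exact ENNReal.ofReal_ne_top
  refine ⟨K.toReal + 1, by positivity, fun g g' hderiv hint => ?_⟩
  -- basic facts about g, g'
  have hgd : ∀ s ∈ Ioo (0:ℝ) 1, deriv g s = g' s := fun s hs => (hderiv s hs).deriv
  have hgcont : ContinuousOn g (Ioo (0:ℝ) 1) :=
    fun s hs => ((hderiv s hs).continuousAt).continuousWithinAt
  have hgae : AEMeasurable g (volume.restrict (Ioo (0:ℝ) 1)) :=
    hgcont.aemeasurable measurableSet_Ioo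
  have hg'ae : AEMeasurable g' (volume.restrict (Ioo (0:ℝ) 1)) := by
    apply (measurable_deriv g).aemeasurable.congr
    rw [Filter.EventuallyEq, ae_restrict_iff' measurableSet_Ioo]
    exact Filter.Eventually.of_forall hgd
  set u : ℝ → ℝ := fun s => (s ^ k * |g' s|) ^ p with hudef
  set v : ℝ → ℝ := fun s => (s ^ k * |g s|) ^ p with hvdef
  have hu_ae : AEMeasurable u (volume.restrict (Ioo (0:ℝ) 1)) := by fun_prop
  have hv_ae : AEMeasurable v (volume.restrict (Ioo (0:ℝ) 1)) := by fun_prop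
  have huv_nn : ∀ s, s ∈ Ioo (0:ℝ) 1 → 0 ≤ u s ∧ 0 ≤ v s := by
    intro s hs
    constructor <;>
      exact Real.rpow_nonneg (mul_nonneg (Real.rpow_nonneg hs.1.le _) (abs_nonneg _)) _
  have hu_int : IntegrableOn u (Ioo (0:ℝ) 1) := by
    apply hint.mono' hu_ae.aestronglyMeasurable
    filter_upwards [ae_restrict_mem measurableSet_Ioo] with s hs
    obtain ⟨h1, h2⟩ := huv_nn s hs
    rw [Real.norm_eq_abs, abs_of_nonneg h1]
    linarith
  have hv_int : IntegrableOn v (Ioo (0:ℝ) 1) := by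
    apply hint.mono' hv_ae.aestronglyMeasurable
    filter_upwards [ae_restrict_mem measurableSet_Ioo] with s hs
    obtain ⟨h1, h2⟩ := huv_nn s hs
    rw [Real.norm_eq_abs, abs_of_nonneg h2]
    linarith
  -- local integrability of g'
  have hg'loc : ∀ c : ℝ, 0 < c → IntegrableOn g' (Ioo c 1) := by
    intro c hc
    rcases lt_or_ge c 1 with hc1 | hc1
    · set m : ℝ := min (c ^ k) ((1:ℝ) ^ k) with hmdef
      have hm : 0 < m := lt_min (Real.rpow_pos_of_pos hc _) (Real.rpow_pos_of_pos one_pos _)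
      have hsub : Ioo c 1 ⊆ Ioo (0:ℝ) 1 := Ioo_subset_Ioo_left hc.le
      apply Integrable.mono' (g := fun t => 1 + m⁻¹ ^ p * u t)
      · exact (integrable_const 1).add ((hu_int.mono_set hsub).const_mul _)
      · exact (hg'ae.mono_measure (Measure.restrict_mono hsub le_rfl)).aestronglyMeasurable
      · filter_upwards [ae_restrict_mem measurableSet_Ioo] with t ht
        have ht0 : 0 < t := hc.trans ht.1
        have htk : m ≤ t ^ k := aux_rpow_min hc ht.1.le ht.2.le
        rw [Real.norm_eq_abs]
        rcases le_total |g' t| 1 with h1 | h1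
        · have h2 : 0 ≤ m⁻¹ ^ p * u t := by
            apply mul_nonneg (Real.rpow_nonneg (by positivity) _)
            exact (huv_nn t (hsub ht)).1
          linarith
        · have h2 : |g' t| ≤ |g' t| ^ p := by
            calc |g' t| = |g' t| ^ (1:ℝ) := (Real.rpow_one _).symm
              _ ≤ |g' t| ^ p := Real.rpow_le_rpow_of_exponent_le h1 hp.le
          have h3 : (m * |g' t|) ^ p ≤ u t := by
            apply Real.rpow_le_rpow (by positivity) _ hp0.le
            exact mul_le_mul_of_nonneg_right htk (abs_nonneg _)
          have h4 : (m * |g' t|) ^ p = m ^ p * |g' t| ^ p :=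
            Real.mul_rpow hm.le (abs_nonneg _)
          have h5 : |g' t| ^ p ≤ m⁻¹ ^ p * u t := by
            rw [Real.inv_rpow hm.le]
            calc |g' t| ^ p = (m ^ p)⁻¹ * (m ^ p * |g' t| ^ p) := by
                  field_simp
              _ ≤ (m ^ p)⁻¹ * u t := by
                  gcongr
                  rw [← h4]; exact h3
          linarith
    · rw [Set.Ioo_eq_empty (by intro h; linarith)]
      exact integrableOn_empty
  -- minimum of |g| on [1/2, 3/4]
  have hsub34 : Icc (2⁻¹:ℝ) (3/4) ⊆ Ioo (0:ℝ) 1 := fun x hx =>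
    ⟨by have := hx.1; norm_num at this ⊢; linarith, by have := hx.2; linarith⟩
  have hcont2 : ContinuousOn (fun t => |g t|) (Icc (2⁻¹:ℝ) (3/4)) :=
    (hgcont.mono hsub34).abs
  obtain ⟨t₀, ht₀mem, ht₀min⟩ := isCompact_Icc.exists_isMinOn
    (nonempty_Icc.2 (by norm_num)) hcont2
  set B : ℝ := |g t₀| with hBdef
  have hB0 : 0 ≤ B := abs_nonneg _
  have ht₀mem' : t₀ ∈ Ioo (0:ℝ) 1 := hsub34 ht₀mem
  have ht₀l : (2⁻¹:ℝ) ≤ t₀ := ht₀mem.1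
  have ht₀r : t₀ ≤ (3/4:ℝ) := ht₀mem.2
  have hgint34 : IntegrableOn (fun t => |g t|) (Icc (2⁻¹:ℝ) (3/4)) :=
    hcont2.integrableOn_compact isCompact_Icc
  have hgint34' : IntegrableOn (fun t => |g t|) (Ioo (2⁻¹:ℝ) (3/4)) :=
    hgint34.mono_set Ioo_subset_Icc_self
  have hB : B ≤ 4 * ∫ t in Ioo (2⁻¹:ℝ) (3/4), |g t| := by
    have h1 : ∫ _t in Ioo (2⁻¹:ℝ) (3/4), B ≤ ∫ t in Ioo (2⁻¹:ℝ) (3/4), |g t| := by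
      apply setIntegral_mono_on (integrableOn_const (by simp [Real.volume_Ioo]))
        hgint34' measurableSet_Ioo
      intro x hx
      exact (isMinOn_iff.1 ht₀min) x ⟨hx.1.le, hx.2.le⟩
    rw [setIntegral_const, measureReal_def, Real.volume_Ioo] at h1
    have h2 : ((ENNReal.ofReal (3/4 - 2⁻¹)).toReal) = 4⁻¹ := by
      rw [ENNReal.toReal_ofReal (by norm_num)]; norm_num
    rw [h2, smul_eq_mul] at h1
    linarith
  -- FTC pointwise bound
  have hpt : ∀ s ∈ Ioo (0:ℝ) 1, |g s| ≤ B + ∫ t in Ioo (min s 2⁻¹) 1, |g' t| := by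
    intro s hs
    have hmin0 : 0 < min s 2⁻¹ := lt_min hs.1 (by norm_num)
    have habs_int : IntegrableOn (fun t => |g' t|) (Ioo (min s 2⁻¹) 1) :=
      (hg'loc _ hmin0).abs
    have habs_nn : 0 ≤ᵐ[volume.restrict (Ioo (min s 2⁻¹) 1)] fun t => |g' t| :=
      Filter.Eventually.of_forall fun t => abs_nonneg _
    rcases le_total s t₀ with hst | hst
    · have hFTC : ∫ t in s..t₀, g' t = g t₀ - g s := by
        apply intervalIntegral.integral_eq_sub_of_hasDerivAt
        · intro x hx
          rw [uIcc_of_le hst] at hx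
          exact hderiv x ⟨lt_of_lt_of_le hs.1 hx.1, lt_of_le_of_lt hx.2 ht₀mem'.2⟩
        · rw [intervalIntegrable_iff, uIoc_of_le hst]
          exact (hg'loc s hs.1).mono_set
            (fun x hx => ⟨hx.1, lt_of_le_of_lt hx.2 ht₀mem'.2⟩)
      have h1 : |g s| ≤ B + |∫ t in s..t₀, g' t| := by
        rw [hFTC]
        calc |g s| = |g t₀ + (g s - g t₀)| := by ring_nf
          _ ≤ |g t₀| + |g s - g t₀| := abs_add_le _ _
          _ = B + |g t₀ - g s| := by rw [abs_sub_comm]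
      have h2 : |∫ t in s..t₀, g' t| ≤ ∫ t in s..t₀, |g' t| :=
        intervalIntegral.abs_integral_le_integral_abs hst
      have h3 : ∫ t in s..t₀, |g' t| ≤ ∫ t in Ioo (min s 2⁻¹) 1, |g' t| := by
        rw [intervalIntegral.integral_of_le hst]
        apply setIntegral_mono_set habs_int habs_nn
        apply HasSubset.Subset.eventuallyLE
        intro x hx
        exact ⟨lt_of_le_of_lt (min_le_left _ _) hx.1, lt_of_le_of_lt hx.2 ht₀mem'.2⟩
      linarith
    · have hFTC : ∫ t in t₀..s, g' t = g s - g t₀ := by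
        apply intervalIntegral.integral_eq_sub_of_hasDerivAt
        · intro x hx
          rw [uIcc_of_le hst] at hx
          exact hderiv x ⟨lt_of_lt_of_le ht₀mem'.1 hx.1, lt_of_le_of_lt hx.2 hs.2⟩
        · rw [intervalIntegrable_iff, uIoc_of_le hst]
          exact (hg'loc t₀ ht₀mem'.1).mono_set
            (fun x hx => ⟨hx.1, lt_of_le_of_lt hx.2 hs.2⟩)
      have h1 : |g s| ≤ B + |∫ t in t₀..s, g' t| := by
        rw [hFTC]
        calc |g s| = |g t₀ + (g s - g t₀)| := by ring_nf
          _ ≤ |g t₀| + |g s - g t₀| := abs_add_le _ _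
      have h2 : |∫ t in t₀..s, g' t| ≤ ∫ t in t₀..s, |g' t| :=
        intervalIntegral.abs_integral_le_integral_abs hst
      have h3 : ∫ t in t₀..s, |g' t| ≤ ∫ t in Ioo (min s 2⁻¹) 1, |g' t| := by
        rw [intervalIntegral.integral_of_le hst]
        apply setIntegral_mono_set habs_int habs_nn
        apply HasSubset.Subset.eventuallyLE
        intro x hx
        refine ⟨lt_of_le_of_lt (min_le_right _ _) (lt_of_le_of_lt ht₀l hx.1), ?_⟩
        · exact lt_of_le_of_lt hx.2 hs.2
      linarith
  -- move to ENNReal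
  set W : ℝ → ℝ≥0∞ := fun t => ENNReal.ofReal (t ^ k * |deriv g t|) with hWdef
  have hW : Measurable W :=
    ((by fun_prop : Measurable fun t : ℝ => t ^ k).mul (measurable_deriv g).abs).ennreal_ofReal
  set V : ℝ → ℝ≥0∞ := fun t => ENNReal.ofReal (t ^ k * |g t|) with hVdef
  set RW : ℝ≥0∞ := ∫⁻ t in Ioo (0:ℝ) 1, W t ^ p with hRWdef
  set RV : ℝ≥0∞ := ∫⁻ t in Ioo (0:ℝ) 1, V t ^ p with hRVdef
  have hWu : ∀ t ∈ Ioo (0:ℝ) 1, W t ^ p = ENNReal.ofReal (u t) := by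
    intro t ht
    rw [hWdef, hudef]
    simp only
    rw [ENNReal.ofReal_rpow_of_nonneg (mul_nonneg (Real.rpow_nonneg ht.1.le _) (abs_nonneg _))
      hp0.le, hgd t ht]
  have hVv : ∀ t ∈ Ioo (0:ℝ) 1, V t ^ p = ENNReal.ofReal (v t) := by
    intro t ht
    rw [hVdef, hvdef]
    simp only
    rw [ENNReal.ofReal_rpow_of_nonneg (mul_nonneg (Real.rpow_nonneg ht.1.le _) (abs_nonneg _))
      hp0.le]
  have hRW : RW = ENNReal.ofReal (∫ t in Ioo (0:ℝ) 1, u t) := by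
    rw [ofReal_integral_eq_lintegral_ofReal hu_int
      (by filter_upwards [ae_restrict_mem measurableSet_Ioo] with s hs using (huv_nn s hs).1)]
    exact setLIntegral_congr_fun measurableSet_Ioo hWu
  have hRV : RV = ENNReal.ofReal (∫ t in Ioo (0:ℝ) 1, v t) := by
    rw [ofReal_integral_eq_lintegral_ofReal hv_int
      (by filter_upwards [ae_restrict_mem measurableSet_Ioo] with s hs using (huv_nn s hs).2)]
    exact setLIntegral_congr_fun measurableSet_Ioo hVv
  set J : ℝ → ℝ≥0∞ := fun s => ∫⁻ t in Ioo s 1, ENNReal.ofReal |g' t| with hJdef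
  set E : ℝ≥0∞ := ENNReal.ofReal B + J 2⁻¹ with hEdef
  have hmaster : ∀ s ∈ Ioo (0:ℝ) 1, ENNReal.ofReal |g s| ≤ E + J s := by
    intro s hs
    have hmin0 : 0 < min s 2⁻¹ := lt_min hs.1 (by norm_num)
    have h0 : ENNReal.ofReal (∫ t in Ioo (min s 2⁻¹) 1, |g' t|) ≤ J s + J 2⁻¹ := by
      rw [ofReal_integral_eq_lintegral_ofReal (hg'loc _ hmin0).abs
        (Filter.Eventually.of_forall fun t => abs_nonneg _)]
      rcases le_total s 2⁻¹ with h | h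
      · rw [min_eq_left h]; exact le_self_add
      · rw [min_eq_right h]; exact le_add_self
    calc ENNReal.ofReal |g s| ≤ ENNReal.ofReal (B + ∫ t in Ioo (min s 2⁻¹) 1, |g' t|) :=
          ENNReal.ofReal_le_ofReal (hpt s hs)
      _ ≤ ENNReal.ofReal B + ENNReal.ofReal (∫ t in Ioo (min s 2⁻¹) 1, |g' t|) :=
          ENNReal.ofReal_add_le
      _ ≤ ENNReal.ofReal B + (J s + J 2⁻¹) := add_le_add le_rfl h0
      _ = E + J s := by rw [hEdef]; ring
  -- Hölder with constant 1
  have holder1 : ∀ (S : Set ℝ) (f : ℝ → ℝ≥0∞), AEMeasurable f (volume.restrict S) →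
      volume S ≤ 1 → (∫⁻ t in S, f t) ^ p ≤ ∫⁻ t in S, f t ^ p := by
    intro S f hf hS
    have h := ENNReal.lintegral_mul_le_Lp_mul_Lq (volume.restrict S) hpq hf
      (aemeasurable_const (b := (1:ℝ≥0∞)))
    simp only [Pi.mul_apply, mul_one] at h
    have h1 : (∫⁻ _t in S, (1:ℝ≥0∞) ^ q) ≤ 1 := by
      simp only [ENNReal.one_rpow]
      rw [setLIntegral_one]
      exact hS
    have h2 : ∫⁻ t in S, f t ≤ (∫⁻ t in S, f t ^ p) ^ (1/p) := by
      calc ∫⁻ t in S, f t ≤ (∫⁻ t in S, f t ^ p) ^ (1/p) * (∫⁻ _t in S, (1:ℝ≥0∞) ^ q) ^ (1/q) := h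
        _ ≤ (∫⁻ t in S, f t ^ p) ^ (1/p) * 1 := by
            apply mul_le_mul_right
            calc (∫⁻ _t in S, (1:ℝ≥0∞) ^ q) ^ (1/q) ≤ (1:ℝ≥0∞) ^ (1/q) :=
                ENNReal.rpow_le_rpow h1 (by positivity)
              _ = 1 := ENNReal.one_rpow _
        _ = (∫⁻ t in S, f t ^ p) ^ (1/p) := mul_one _
    calc (∫⁻ t in S, f t) ^ p ≤ ((∫⁻ t in S, f t ^ p) ^ (1/p)) ^ p :=
          ENNReal.rpow_le_rpow h2 hp0.le
      _ = (∫⁻ t in S, f t ^ p) ^ ((1/p) * p) := by rw [← ENNReal.rpow_mul]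
      _ = ∫⁻ t in S, f t ^ p := by rw [show (1/p) * p = 1 by field_simp, ENNReal.rpow_one]
  -- bound for ofReal B ^ p
  have hsub34' : Ioo (2⁻¹:ℝ) (3/4) ⊆ Ioo (0:ℝ) 1 := fun x hx =>
    ⟨by have := hx.1; norm_num at this ⊢; linarith, by have := hx.2; linarith⟩
  have hBbound : ENNReal.ofReal B ^ p
      ≤ ENNReal.ofReal 4 ^ p * (ENNReal.ofReal m₀⁻¹ ^ p * RV) := by
    have h1 : ENNReal.ofReal B
        ≤ ENNReal.ofReal 4 * ∫⁻ t in Ioo (2⁻¹:ℝ) (3/4), ENNReal.ofReal |g t| := by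
      calc ENNReal.ofReal B ≤ ENNReal.ofReal (4 * ∫ t in Ioo (2⁻¹:ℝ) (3/4), |g t|) :=
            ENNReal.ofReal_le_ofReal hB
        _ = ENNReal.ofReal 4 * ENNReal.ofReal (∫ t in Ioo (2⁻¹:ℝ) (3/4), |g t|) :=
            ENNReal.ofReal_mul (by norm_num)
        _ = ENNReal.ofReal 4 * ∫⁻ t in Ioo (2⁻¹:ℝ) (3/4), ENNReal.ofReal |g t| := by
            rw [ofReal_integral_eq_lintegral_ofReal hgint34'
              (Filter.Eventually.of_forall fun t => abs_nonneg _)]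
    have hmeas : AEMeasurable (fun t => ENNReal.ofReal |g t|)
        (volume.restrict (Ioo (2⁻¹:ℝ) (3/4))) :=
      (continuous_abs.measurable.comp_aemeasurable
        (hgae.mono_measure (Measure.restrict_mono hsub34' le_rfl))).ennreal_ofReal
    have hvol : volume (Ioo (2⁻¹:ℝ) (3/4)) ≤ 1 := by
      rw [Real.volume_Ioo]
      exact ENNReal.ofReal_le_one.2 (by norm_num)
    have hpw : ∀ t ∈ Ioo (2⁻¹:ℝ) (3/4),
        ENNReal.ofReal |g t| ^ p ≤ ENNReal.ofReal m₀⁻¹ ^ p * V t ^ p := by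
      intro t ht
      have ht0 : (0:ℝ) < 2⁻¹ := by norm_num
      have htk : m₀ ≤ t ^ k := aux_rpow_min ht0 ht.1.le ht.2.le
      have hg1 : |g t| ≤ m₀⁻¹ * (t ^ k * |g t|) := by
        calc |g t| = m₀⁻¹ * (m₀ * |g t|) := by field_simp
          _ ≤ m₀⁻¹ * (t ^ k * |g t|) := by gcongr
      calc ENNReal.ofReal |g t| ^ p ≤ ENNReal.ofReal (m₀⁻¹ * (t ^ k * |g t|)) ^ p :=
            ENNReal.rpow_le_rpow (ENNReal.ofReal_le_ofReal hg1) hp0.le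
        _ = (ENNReal.ofReal m₀⁻¹ * V t) ^ p := by
            rw [ENNReal.ofReal_mul (by positivity)]
        _ = ENNReal.ofReal m₀⁻¹ ^ p * V t ^ p := ENNReal.mul_rpow_of_nonneg _ _ hp0.le
    calc ENNReal.ofReal B ^ p
        ≤ (ENNReal.ofReal 4 * ∫⁻ t in Ioo (2⁻¹:ℝ) (3/4), ENNReal.ofReal |g t|) ^ p :=
          ENNReal.rpow_le_rpow h1 hp0.le
      _ = ENNReal.ofReal 4 ^ p * (∫⁻ t in Ioo (2⁻¹:ℝ) (3/4), ENNReal.ofReal |g t|) ^ p :=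
          ENNReal.mul_rpow_of_nonneg _ _ hp0.le
      _ ≤ ENNReal.ofReal 4 ^ p * ∫⁻ t in Ioo (2⁻¹:ℝ) (3/4), ENNReal.ofReal |g t| ^ p :=
          mul_le_mul_right (holder1 _ _ hmeas hvol) _
      _ ≤ ENNReal.ofReal 4 ^ p * ∫⁻ t in Ioo (2⁻¹:ℝ) (3/4), ENNReal.ofReal m₀⁻¹ ^ p * V t ^ p :=
          mul_le_mul_right (setLIntegral_mono' measurableSet_Ioo hpw) _
      _ = ENNReal.ofReal 4 ^ p * (ENNReal.ofReal m₀⁻¹ ^ p * ∫⁻ t in Ioo (2⁻¹:ℝ) (3/4), V t ^ p) := by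
          rw [lintegral_const_mul' _ _ (ENNReal.rpow_ne_top_of_nonneg hp0.le ENNReal.ofReal_ne_top)]
      _ ≤ ENNReal.ofReal 4 ^ p * (ENNReal.ofReal m₀⁻¹ ^ p * RV) := by
          apply mul_le_mul_right
          apply mul_le_mul_right
          exact lintegral_mono' (Measure.restrict_mono hsub34' le_rfl) le_rfl
  -- bound for (J 2⁻¹) ^ p
  have hsub21 : Ioo (2⁻¹:ℝ) 1 ⊆ Ioo (0:ℝ) 1 := Ioo_subset_Ioo_left (by norm_num)
  have hIcbound : (J 2⁻¹) ^ p ≤ ENNReal.ofReal m₁⁻¹ ^ p * RW := by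
    have hmeas : AEMeasurable (fun t => ENNReal.ofReal |g' t|)
        (volume.restrict (Ioo (2⁻¹:ℝ) 1)) :=
      (continuous_abs.measurable.comp_aemeasurable
        (hg'ae.mono_measure (Measure.restrict_mono hsub21 le_rfl))).ennreal_ofReal
    have hvol : volume (Ioo (2⁻¹:ℝ) 1) ≤ 1 := by
      rw [Real.volume_Ioo]
      exact ENNReal.ofReal_le_one.2 (by norm_num)
    have hpw : ∀ t ∈ Ioo (2⁻¹:ℝ) 1,
        ENNReal.ofReal |g' t| ^ p ≤ ENNReal.ofReal m₁⁻¹ ^ p * W t ^ p := by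
      intro t ht
      have htmem : t ∈ Ioo (0:ℝ) 1 := hsub21 ht
      have htk : m₁ ≤ t ^ k := aux_rpow_min (by norm_num) ht.1.le ht.2.le
      have hg1 : |g' t| ≤ m₁⁻¹ * (t ^ k * |g' t|) := by
        calc |g' t| = m₁⁻¹ * (m₁ * |g' t|) := by field_simp
          _ ≤ m₁⁻¹ * (t ^ k * |g' t|) := by gcongr
      calc ENNReal.ofReal |g' t| ^ p ≤ ENNReal.ofReal (m₁⁻¹ * (t ^ k * |g' t|)) ^ p :=
            ENNReal.rpow_le_rpow (ENNReal.ofReal_le_ofReal hg1) hp0.le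
        _ = (ENNReal.ofReal m₁⁻¹ * W t) ^ p := by
            rw [ENNReal.ofReal_mul (by positivity), hWdef]
            simp only
            rw [hgd t htmem]
        _ = ENNReal.ofReal m₁⁻¹ ^ p * W t ^ p := ENNReal.mul_rpow_of_nonneg _ _ hp0.le
    calc (J 2⁻¹) ^ p ≤ ∫⁻ t in Ioo (2⁻¹:ℝ) 1, ENNReal.ofReal |g' t| ^ p :=
          holder1 _ _ hmeas hvol
      _ ≤ ∫⁻ t in Ioo (2⁻¹:ℝ) 1, ENNReal.ofReal m₁⁻¹ ^ p * W t ^ p :=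
          setLIntegral_mono' measurableSet_Ioo hpw
      _ = ENNReal.ofReal m₁⁻¹ ^ p * ∫⁻ t in Ioo (2⁻¹:ℝ) 1, W t ^ p :=
          lintegral_const_mul' _ _ (ENNReal.rpow_ne_top_of_nonneg hp0.le ENNReal.ofReal_ne_top)
      _ ≤ ENNReal.ofReal m₁⁻¹ ^ p * RW :=
          mul_le_mul_right (lintegral_mono' (Measure.restrict_mono hsub21 le_rfl) le_rfl) _
  -- the Hardy core bound
  have hT2 : ∫⁻ s in Ioo (0:ℝ) 1, (ENNReal.ofReal (s ^ (k - 1)) * J s) ^ p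
      ≤ ENNReal.ofReal C₂ * RW := by
    have hJeq : ∀ s ∈ Ioo (0:ℝ) 1,
        J s = ∫⁻ t in Ioo s 1, ENNReal.ofReal (t ^ (-k)) * W t := by
      intro s hs
      apply setLIntegral_congr_fun measurableSet_Ioo
      intro t ht
      have ht0 : (0:ℝ) < t := hs.1.trans ht.1
      have heq : t ^ (-k) * (t ^ k * |deriv g t|) = |g' t| := by
        rw [hgd t ⟨ht0, ht.2⟩, ← mul_assoc, ← Real.rpow_add ht0]
        norm_num
      rw [hWdef]
      simp only
      rw [← ENNReal.ofReal_mul (Real.rpow_nonneg ht0.le _), heq]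
    calc ∫⁻ s in Ioo (0:ℝ) 1, (ENNReal.ofReal (s ^ (k - 1)) * J s) ^ p
        = ∫⁻ s in Ioo (0:ℝ) 1,
            (ENNReal.ofReal (s ^ (k - 1)) * ∫⁻ t in Ioo s 1, ENNReal.ofReal (t ^ (-k)) * W t) ^ p := by
          apply setLIntegral_congr_fun measurableSet_Ioo
          intro s hs; beta_reduce
          rw [hJeq s hs]
      _ ≤ ENNReal.ofReal C₂ * RW := hC₂ W hW
  -- the weight integral
  have hT1 : ∫⁻ s in Ioo (0:ℝ) 1, ENNReal.ofReal (s ^ (k - 1)) ^ p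
      = ENNReal.ofReal (1 / ((k - 1) * p + 1)) := by
    have h1 : ∫⁻ s in Ioo (0:ℝ) 1, ENNReal.ofReal (s ^ (k - 1)) ^ p
        = ∫⁻ s in Ioo (0:ℝ) 1, ENNReal.ofReal (s ^ ((k - 1) * p)) := by
      apply setLIntegral_congr_fun measurableSet_Ioo
      intro s hs; beta_reduce
      rw [ENNReal.ofReal_rpow_of_pos (Real.rpow_pos_of_pos hs.1 _), ← Real.rpow_mul hs.1.le]
    rw [h1, aux_lint_rpow_zero (by linarith) one_pos, Real.one_rpow]
  -- main chain
  set L : ℝ≥0∞ := ∫⁻ s in Ioo (0:ℝ) 1, ENNReal.ofReal ((s ^ (k - 1) * |g s|) ^ p) with hLdef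
  have hL1 : L ≤ 2 ^ p * ((ENNReal.ofReal (1 / ((k - 1) * p + 1)) * E ^ p)
      + ∫⁻ s in Ioo (0:ℝ) 1, (ENNReal.ofReal (s ^ (k - 1)) * J s) ^ p) := by
    have hpw : ∀ s ∈ Ioo (0:ℝ) 1, ENNReal.ofReal ((s ^ (k - 1) * |g s|) ^ p)
        ≤ 2 ^ p * (ENNReal.ofReal (s ^ (k - 1)) ^ p * E ^ p
          + (ENNReal.ofReal (s ^ (k - 1)) * J s) ^ p) := by
      intro s hs
      have e1 : ENNReal.ofReal ((s ^ (k - 1) * |g s|) ^ p)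
          = (ENNReal.ofReal (s ^ (k - 1)) * ENNReal.ofReal |g s|) ^ p := by
        rw [← ENNReal.ofReal_mul (Real.rpow_nonneg hs.1.le _),
          ENNReal.ofReal_rpow_of_nonneg
            (mul_nonneg (Real.rpow_nonneg hs.1.le _) (abs_nonneg _)) hp0.le]
      calc ENNReal.ofReal ((s ^ (k - 1) * |g s|) ^ p)
          = (ENNReal.ofReal (s ^ (k - 1)) * ENNReal.ofReal |g s|) ^ p := e1
        _ ≤ (ENNReal.ofReal (s ^ (k - 1)) * (E + J s)) ^ p :=
            ENNReal.rpow_le_rpow (mul_le_mul_right (hmaster s hs) _) hp0.le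
        _ = (ENNReal.ofReal (s ^ (k - 1)) * E + ENNReal.ofReal (s ^ (k - 1)) * J s) ^ p := by
            rw [mul_add]
        _ ≤ 2 ^ p * ((ENNReal.ofReal (s ^ (k - 1)) * E) ^ p
            + (ENNReal.ofReal (s ^ (k - 1)) * J s) ^ p) := aux_two hp0.le
        _ = 2 ^ p * (ENNReal.ofReal (s ^ (k - 1)) ^ p * E ^ p
            + (ENNReal.ofReal (s ^ (k - 1)) * J s) ^ p) := by
            rw [ENNReal.mul_rpow_of_nonneg _ _ hp0.le]
    calc L ≤ ∫⁻ s in Ioo (0:ℝ) 1, 2 ^ p * (ENNReal.ofReal (s ^ (k - 1)) ^ p * E ^ p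
          + (ENNReal.ofReal (s ^ (k - 1)) * J s) ^ p) :=
          setLIntegral_mono' measurableSet_Ioo hpw
      _ = 2 ^ p * ∫⁻ s in Ioo (0:ℝ) 1, (ENNReal.ofReal (s ^ (k - 1)) ^ p * E ^ p
          + (ENNReal.ofReal (s ^ (k - 1)) * J s) ^ p) := lintegral_const_mul' _ _ h2top
      _ = 2 ^ p * ((∫⁻ s in Ioo (0:ℝ) 1, ENNReal.ofReal (s ^ (k - 1)) ^ p * E ^ p)
          + ∫⁻ s in Ioo (0:ℝ) 1, (ENNReal.ofReal (s ^ (k - 1)) * J s) ^ p) := by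
          rw [lintegral_add_left (((aux_meas (k - 1)).pow_const p).mul_const _)]
      _ = 2 ^ p * ((ENNReal.ofReal (1 / ((k - 1) * p + 1)) * E ^ p)
          + ∫⁻ s in Ioo (0:ℝ) 1, (ENNReal.ofReal (s ^ (k - 1)) * J s) ^ p) := by
          rw [lintegral_mul_const _ ((aux_meas (k - 1)).pow_const p), hT1]
  have hfinal : L ≤ K * (RW + RV) := by
    have hE2 : E ^ p ≤ 2 ^ p * (ENNReal.ofReal 4 ^ p * (ENNReal.ofReal m₀⁻¹ ^ p * RV)
        + ENNReal.ofReal m₁⁻¹ ^ p * RW) := by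
      exact (aux_two hp0.le).trans (mul_le_mul_right (add_le_add hBbound hIcbound) _)
    calc L ≤ 2 ^ p * ((ENNReal.ofReal (1 / ((k - 1) * p + 1)) * E ^ p)
          + ∫⁻ s in Ioo (0:ℝ) 1, (ENNReal.ofReal (s ^ (k - 1)) * J s) ^ p) := hL1
      _ ≤ 2 ^ p * ((ENNReal.ofReal (1 / ((k - 1) * p + 1))
            * (2 ^ p * (ENNReal.ofReal 4 ^ p * (ENNReal.ofReal m₀⁻¹ ^ p * RV)
              + ENNReal.ofReal m₁⁻¹ ^ p * RW)))
          + ENNReal.ofReal C₂ * RW) :=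
          mul_le_mul_right (add_le_add (mul_le_mul_right hE2 _) hT2) _
      _ ≤ 2 ^ p * ((ENNReal.ofReal (1 / ((k - 1) * p + 1))
            * (2 ^ p * (ENNReal.ofReal 4 ^ p * (ENNReal.ofReal m₀⁻¹ ^ p * (RW + RV))
              + ENNReal.ofReal m₁⁻¹ ^ p * (RW + RV))))
          + ENNReal.ofReal C₂ * (RW + RV)) :=
          mul_le_mul_right
            (add_le_add
              (mul_le_mul_right
                (mul_le_mul_right
                  (add_le_add
                    (mul_le_mul_right (mul_le_mul_right le_add_self _) _)
                    (mul_le_mul_right le_self_add _)) _) _)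
              (mul_le_mul_right le_self_add _)) _
      _ = K * (RW + RV) := by rw [hKdef]; ring
  -- convert back to real integrals
  have hintnn : ∀ s ∈ Ioo (0:ℝ) 1, 0 ≤ u s + v s := fun s hs =>
    add_nonneg (huv_nn s hs).1 (huv_nn s hs).2
  have hInn : 0 ≤ ∫ s in Ioo (0:ℝ) 1, (u s + v s) :=
    setIntegral_nonneg measurableSet_Ioo hintnn
  have hR : RW + RV = ENNReal.ofReal (∫ s in Ioo (0:ℝ) 1, (u s + v s)) := by
    rw [integral_add hu_int hv_int,
      ENNReal.ofReal_add (setIntegral_nonneg measurableSet_Ioo fun s hs => (huv_nn s hs).1)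
        (setIntegral_nonneg measurableSet_Ioo fun s hs => (huv_nn s hs).2),
      hRW, hRV]
  have hlhs : ∫ s in Ioo (0:ℝ) 1, (s ^ (k - 1) * |g s|) ^ p = L.toReal := by
    rw [hLdef]
    apply integral_eq_lintegral_of_nonneg_ae
    · filter_upwards [ae_restrict_mem measurableSet_Ioo] with s hs
      exact Real.rpow_nonneg (mul_nonneg (Real.rpow_nonneg hs.1.le _) (abs_nonneg _)) _
    · exact (by fun_prop :
        AEMeasurable (fun s : ℝ => (s ^ (k - 1) * |g s|) ^ p)
          (volume.restrict (Ioo (0:ℝ) 1))).aestronglyMeasurable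
  rw [hlhs]
  calc L.toReal ≤ (K * (RW + RV)).toReal := by
        apply ENNReal.toReal_mono _ hfinal
        rw [hR]
        exact ENNReal.mul_ne_top hKtop ENNReal.ofReal_ne_top
    _ = K.toReal * ∫ s in Ioo (0:ℝ) 1, (u s + v s) := by
        rw [hR, ENNReal.toReal_mul, ENNReal.toReal_ofReal hInn]
    _ ≤ (K.toReal + 1) * ∫ s in Ioo (0:ℝ) 1, (u s + v s) :=
        mul_le_mul_of_nonneg_right (by linarith) hInn
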